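/- Let 𝓝 and 𝓜 be nonempty labels. Then the label 𝓝 ⊕ 𝓜 = {n + m : n ∈ 𝓝, m ∈ 𝓜} is of finite type if and only if both 𝓝 and 𝓜 are of finite type. -/

import Mathlib

/-- A label: a hereditary set of ℕ-vectors (finitely supported functions `ℕ → ℕ`). -/
def IsLabel (M : Set (ℕ →₀ ℕ)) : Prop :=
  ∀ m₁ m : ℕ →₀ ℕ, m₁ ≤ m → m ∈ M → m₁ ∈ M

/-- A label is of finite type if it contains no strictly increasing infinite sequence. -/
def FiniteType (M : Set (ℕ →₀ ℕ)) : Prop :=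
  ¬ ∃ f : ℕ → (ℕ →₀ ℕ), (∀ i, f i ∈ M) ∧ StrictMono f

/-- `𝓝 ⊕ 𝓜 = {n + m : n ∈ 𝓝, m ∈ 𝓜}`. -/
def oplus (N M : Set (ℕ →₀ ℕ)) : Set (ℕ →₀ ℕ) :=
  {s | ∃ n ∈ N, ∃ m ∈ M, s = n + m}

open Filter

/-- degree of a vector -/
def deg (v : ℕ →₀ ℕ) : ℕ := ∑ ℓ ∈ v.support, v ℓ

lemma deg_eq_sum {s : Finset ℕ} {v : ℕ →₀ ℕ} (h : v.support ⊆ s) :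
    deg v = ∑ ℓ ∈ s, v ℓ :=
  Finset.sum_subset h (fun x _ hx => Finsupp.notMem_support_iff.mp hx)

lemma support_subset_of_le {a b : ℕ →₀ ℕ} (h : a ≤ b) : a.support ⊆ b.support := by
  intro x hx
  have := Finsupp.le_def.mp h x
  simp only [Finsupp.mem_support_iff] at hx ⊢
  omega

lemma deg_mono {a b : ℕ →₀ ℕ} (h : a ≤ b) : deg a ≤ deg b := by
  rw [deg_eq_sum (support_subset_of_le h), deg]
  exact Finset.sum_le_sum fun i _ => Finsupp.le_def.mp h i

lemma deg_strictMono {a b : ℕ →₀ ℕ} (h : a < b) : deg a < deg b := by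
  obtain ⟨hle, hne⟩ := lt_iff_le_and_ne.mp h
  obtain ⟨x, hx⟩ : ∃ y, a y ≠ b y := by
    by_contra hc
    push_neg at hc
    exact hne (Finsupp.ext hc)
  have hxlt : a x < b x := lt_of_le_of_ne (Finsupp.le_def.mp hle x) hx
  rw [deg_eq_sum (support_subset_of_le hle), deg]
  refine Finset.sum_lt_sum (fun i _ => Finsupp.le_def.mp hle i) ⟨x, ?_, hxlt⟩
  simp only [Finsupp.mem_support_iff]
  omega

/-- From a family of unboundedly large vectors all U-dominated by the `n j`,
we get an infinite strictly increasing chain in the label. -/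
lemma notFT {S : Set (ℕ →₀ ℕ)} (hS : IsLabel S) (n : ℕ → (ℕ →₀ ℕ))
    (hn : ∀ j, n j ∈ S) (U : Ultrafilter ℕ)
    (h : ∀ k, ∃ v : ℕ →₀ ℕ, k ≤ deg v ∧ {j | v ≤ n j} ∈ U) : ¬ FiniteType S := by
  choose v hv1 hv2 using h
  let w : ℕ → (ℕ →₀ ℕ) := fun k => Nat.rec (motive := fun _ => ℕ →₀ ℕ) 0 (fun k wk => wk ⊔ v (k + 1)) k
  have hwU : ∀ k, {j | w k ≤ n j} ∈ U := by
    intro k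
    induction k with
    | zero =>
      have : {j | w 0 ≤ n j} = Set.univ := by
        ext j; simp [w]
      rw [this]; exact Filter.univ_mem
    | succ k ih =>
      refine Filter.mem_of_superset (Filter.inter_mem ih (hv2 (k + 1))) ?_
      intro j hj
      have hw : w (k + 1) = w k ⊔ v (k + 1) := rfl
      simp only [Set.mem_setOf_eq, hw] at hj ⊢
      exact sup_le hj.1 hj.2
  have hwdeg : ∀ k, k ≤ deg (w k) := by
    intro k
    cases k with
    | zero => exact Nat.zero_le _
    | succ k => exact le_trans (hv1 (k + 1)) (deg_mono le_sup_right)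
  have hwmono : Monotone w := by
    apply monotone_nat_of_le_succ
    intro k
    exact le_sup_left
  have hwS : ∀ k, w k ∈ S := by
    intro k
    obtain ⟨j, hj⟩ := Ultrafilter.nonempty_of_mem (hwU k)
    exact hS _ _ hj (hn j)
  -- build a strictly increasing subsequence
  let φ : ℕ → ℕ := fun t => Nat.rec 0 (fun _ p => deg (w p) + 1) t
  have hφ : ∀ t, w (φ t) < w (φ (t + 1)) := by
    intro t
    have h1 : φ (t + 1) = deg (w (φ t)) + 1 := rfl
    have h2 : deg (w (φ t)) < deg (w (φ (t + 1))) := by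
      have := hwdeg (φ (t + 1))
      omega
    have hle : φ t ≤ φ (t + 1) := by
      have := hwdeg (φ t); omega
    exact lt_of_le_of_ne (hwmono hle) (fun e => by rw [e] at h2; omega)
  intro hFT
  exact hFT ⟨fun t => w (φ t), fun t => hwS _, strictMono_nat_of_lt_succ hφ⟩

lemma extract (U : Ultrafilter ℕ) (n : ℕ → (ℕ →₀ ℕ)) (c : ℕ →₀ ℕ) (k : ℕ)
    (J1 : Set ℕ) (hJ1 : J1 ∈ U) (h : ∀ j ∈ J1, k ≤ deg (n j ⊓ c)) :
    ∃ v : ℕ →₀ ℕ, k ≤ deg v ∧ {j | v ≤ n j} ∈ U := by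
  have hfin : (Set.Iic c).Finite := Set.finite_Iic c
  have hsub : J1 ⊆ ⋃ v ∈ Set.Iic c, {j | j ∈ J1 ∧ n j ⊓ c = v} := by
    intro j hj
    have hv : n j ⊓ c ∈ Set.Iic c := Set.mem_Iic.mpr inf_le_right
    exact Set.mem_biUnion hv ⟨hj, rfl⟩
  have hmem : (⋃ v ∈ Set.Iic c, {j | j ∈ J1 ∧ n j ⊓ c = v}) ∈ U :=
    Filter.mem_of_superset hJ1 hsub
  obtain ⟨v, _, hvU⟩ := (Ultrafilter.finite_biUnion_mem_iff hfin).mp hmem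
  obtain ⟨j, hjJ, hje⟩ := Ultrafilter.nonempty_of_mem hvU
  refine ⟨v, hje ▸ h j hjJ, Filter.mem_of_superset hvU ?_⟩
  rintro j' ⟨_, rfl⟩
  simp only [Set.mem_setOf_eq]
  exact inf_le_left

theorem stmt11 (N M : Set (ℕ →₀ ℕ)) (hN : IsLabel N) (hM : IsLabel M)
    (hNne : N.Nonempty) (hMne : M.Nonempty) :
    FiniteType (oplus N M) ↔ FiniteType N ∧ FiniteType M := by
  constructor
  · intro hft
    constructor
    · rintro ⟨g, hg, hgs⟩
      obtain ⟨m₀, hm₀⟩ := hMne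
      refine hft ⟨fun i => g i + m₀, fun i => ⟨g i, hg i, m₀, hm₀, rfl⟩, ?_⟩
      intro a b hab
      exact lt_of_le_of_ne (add_le_add_left (hgs hab).le m₀)
        (fun e => (hgs hab).ne (add_right_cancel e))
    · rintro ⟨g, hg, hgs⟩
      obtain ⟨n₀, hn₀⟩ := hNne
      refine hft ⟨fun i => n₀ + g i, fun i => ⟨n₀, hn₀, g i, hg i, rfl⟩, ?_⟩
      intro a b hab
      exact lt_of_le_of_ne (add_le_add_right (hgs hab).le n₀)
        (fun e => (hgs hab).ne (add_left_cancel e))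
  · rintro ⟨hNft, hMft⟩ ⟨f, hfmem, hfs⟩
    choose n hnN m hmM hfeq using hfmem
    set U : Ultrafilter ℕ := Filter.hyperfilter ℕ with hU
    -- degree grows along the chain
    have hdeg : ∀ i, i ≤ deg (f i) := by
      intro i
      induction i with
      | zero => exact Nat.zero_le _
      | succ i ih =>
        have := deg_strictMono (hfs (by omega : i < i + 1))
        omega
    have claim : ∀ k, (∃ v : ℕ →₀ ℕ, k ≤ deg v ∧ {j | v ≤ n j} ∈ U) ∨
        (∃ v : ℕ →₀ ℕ, k ≤ deg v ∧ {j | v ≤ m j} ∈ U) := by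
      intro k
      set i := 2 * k with hi
      have hJ : {j | i ≤ j} ∈ U := by
        apply Filter.mem_hyperfilter_of_finite_compl
        have : {j | i ≤ j}ᶜ ⊆ Set.Iio i := by
          intro j hj
          simp only [Set.mem_compl_iff, Set.mem_setOf_eq, not_le] at hj
          exact hj
        exact (Set.finite_Iio i).subset this
      -- dichotomy on each j ≥ i
      have hdich : ∀ j ∈ {j | i ≤ j},
          k ≤ deg (n j ⊓ f i) ∨ k ≤ deg (m j ⊓ f i) := by
        intro j hj
        have hle : f i ≤ n j + m j := by
          rw [← hfeq j]
          exact (hfs.monotone hj)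
        have hab : deg (f i) ≤ deg (n j ⊓ f i) + deg (m j ⊓ f i) := by
          have h1 : deg (n j ⊓ f i) = ∑ ℓ ∈ (f i).support, (n j ⊓ f i) ℓ :=
            deg_eq_sum (support_subset_of_le inf_le_right)
          have h2 : deg (m j ⊓ f i) = ∑ ℓ ∈ (f i).support, (m j ⊓ f i) ℓ :=
            deg_eq_sum (support_subset_of_le inf_le_right)
          rw [h1, h2, ← Finset.sum_add_distrib, deg]
          apply Finset.sum_le_sum
          intro ℓ _
          have := Finsupp.le_def.mp hle ℓ
          rw [Finsupp.add_apply] at this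
          rw [Finsupp.inf_apply, Finsupp.inf_apply]
          omega
        have h2k : 2 * k ≤ deg (f i) := le_trans (le_of_eq hi.symm) (hdeg i)
        omega
      have hsplit : ({j | i ≤ j} ∩ {j | k ≤ deg (n j ⊓ f i)}) ∪
          ({j | i ≤ j} ∩ {j | k ≤ deg (m j ⊓ f i)}) ∈ U := by
        refine Filter.mem_of_superset hJ ?_
        intro j hj
        rcases hdich j hj with h | h
        · exact Set.mem_union_left _ ⟨hj, h⟩
        · exact Set.mem_union_right _ ⟨hj, h⟩
      rcases (Ultrafilter.union_mem_iff).mp hsplit with h | h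
      · exact Or.inl (extract U n (f i) k _ h (fun j hj => hj.2))
      · exact Or.inr (extract U m (f i) k _ h (fun j hj => hj.2))
    by_cases hall : ∀ k, ∃ v : ℕ →₀ ℕ, k ≤ deg v ∧ {j | v ≤ n j} ∈ U
    · exact notFT hN n hnN U hall hNft
    · push_neg at hall
      obtain ⟨k₀, hk₀⟩ := hall
      have hm : ∀ k, ∃ v : ℕ →₀ ℕ, k ≤ deg v ∧ {j | v ≤ m j} ∈ U := by
        intro k
        rcases claim (max k k₀) with ⟨v, hv1, hv2⟩ | ⟨v, hv1, hv2⟩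
        · exact absurd hv2 (hk₀ v (le_trans (le_max_right k k₀) hv1))
        · exact ⟨v, le_trans (le_max_left k k₀) hv1, hv2⟩
      exact notFT hM m hmM U hm hMft
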